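/- Let n be a positive integer, let (a₁, …, aₙ) ∈ ℤⁿ be nonzero, and let p be a prime such that p > |aᵢ·aⱼ| − min_k |a_k| for all i ≠ j, and p > |aᵢ| for all i. Then 0 ≤ (1/p)·h_p(ā₁,…,āₙ) − h_∞(a₁,…,aₙ) ≤ |a₁ + ⋯ + aₙ|/p, where āᵢ denotes the residue of aᵢ modulo p. -/

import Mathlib

/-- Nathanson height of a subspace `V ⊆ (ℤ/pℤ)^n`. -/
noncomputable def nheight {p n : ℕ} (V : Submodule (ZMod p) (Fin n → ZMod p)) : ℕ :=
  sInf {k : ℕ | ∃ v ∈ V, v ≠ 0 ∧ k = ∑ i, (v i).val}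

/-- `fx a x = liminf_{t → x} ∑ᵢ {aᵢ t}`, where `{y}` is the fractional part and the limit
is over the punctured neighborhood of `x`. -/
noncomputable def fx {n : ℕ} (a : Fin n → ℤ) (x : ℝ) : ℝ :=
  Filter.liminf (fun t : ℝ => ∑ i, Int.fract ((a i : ℝ) * t)) (nhdsWithin x {x}ᶜ)

/-- `hinf a` is the minimum of `fx a x` over `x ∈ [0, 1)`. -/
noncomputable def hinf {n : ℕ} (a : Fin n → ℤ) : ℝ :=
  sInf (fx a '' Set.Ico (0 : ℝ) 1)

open Filter Topology

namespace NathansonAux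

variable {n : ℕ}

noncomputable def G (a : Fin n → ℤ) (t : ℝ) : ℝ := ∑ i, Int.fract ((a i : ℝ) * t)

noncomputable def cterm (b : ℤ) (x : ℝ) : ℝ :=
  if b < 0 then 1 - Int.fract (-(b : ℝ) * x) else Int.fract ((b : ℝ) * x)

noncomputable def Lp (a : Fin n → ℤ) (x : ℝ) : ℝ := ∑ i, cterm (a i) x

lemma G_nonneg (a : Fin n → ℤ) (t : ℝ) : 0 ≤ G a t :=
  Finset.sum_nonneg fun _ _ => Int.fract_nonneg _

lemma G_le (a : Fin n → ℤ) (t : ℝ) : G a t ≤ n := by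
  have : G a t ≤ ∑ _i : Fin n, (1 : ℝ) :=
    Finset.sum_le_sum fun i _ => (Int.fract_lt_one _).le
  simpa using this

lemma neg_G (a : Fin n → ℤ) (t : ℝ) : G (-a) (-t) = G a t := by
  unfold G
  refine Finset.sum_congr rfl fun i _ => ?_
  congr 1
  simp only [Pi.neg_apply]
  push_cast
  ring

lemma fract_eventually (b : ℤ) (x : ℝ) :
    ∀ᶠ t in 𝓝[>] x, Int.fract ((b : ℝ) * t) = cterm b x + (b : ℝ) * (t - x) := by
  rcases lt_trichotomy b 0 with hb | hb | hb
  · have hbR : ((b : ℝ)) < 0 := by exact_mod_cast hb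
    have hf1 : Int.fract (-(b : ℝ) * x) < 1 := Int.fract_lt_one _
    set δ : ℝ := (1 - Int.fract (-(b : ℝ) * x)) / (-(b : ℝ)) with hδdef
    have hδ : 0 < δ := div_pos (by linarith) (by linarith)
    have hδmul : (-(b : ℝ)) * δ = 1 - Int.fract (-(b : ℝ) * x) := by
      rw [hδdef, mul_div_cancel₀ _ (by linarith : -(b:ℝ) ≠ 0)]
    have hmem : Set.Ioo x (x + δ) ∈ 𝓝[>] x :=
      Ioo_mem_nhdsGT (by linarith)
    filter_upwards [hmem] with t ht
    obtain ⟨ht1, ht2⟩ := ht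
    have hfr : Int.fract (-(b:ℝ) * x) = -(b:ℝ) * x - ⌊-(b:ℝ) * x⌋ := rfl
    have hK : ⌊(b : ℝ) * t⌋ = -⌊-(b:ℝ) * x⌋ - 1 := by
      have hup : (-(b:ℝ)) * t < (-(b:ℝ)) * (x + δ) :=
        (mul_lt_mul_iff_right₀ (by linarith)).2 ht2
      have hlo : (-(b:ℝ)) * x < (-(b:ℝ)) * t :=
        (mul_lt_mul_iff_right₀ (by linarith)).2 ht1
      have hfl : (⌊-(b:ℝ) * x⌋ : ℝ) ≤ -(b:ℝ) * x := Int.floor_le _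
      rw [Int.floor_eq_iff]
      constructor
      · push_cast
        nlinarith [hup, hδmul, hfr]
      · push_cast
        nlinarith [hlo, hfl]
    have hfe : Int.fract ((b:ℝ) * t) = (b:ℝ) * t - ⌊(b:ℝ)*t⌋ := rfl
    rw [hfe, hK, cterm, if_pos hb, hfr]
    push_cast
    ring
  · subst hb
    filter_upwards with t
    simp [cterm]
  · have hbR : (0:ℝ) < (b : ℝ) := by exact_mod_cast hb
    have hf1 : Int.fract ((b : ℝ) * x) < 1 := Int.fract_lt_one _
    set δ : ℝ := (1 - Int.fract ((b : ℝ) * x)) / (b : ℝ) with hδdef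
    have hδ : 0 < δ := div_pos (by linarith) hbR
    have hδmul : (b : ℝ) * δ = 1 - Int.fract ((b : ℝ) * x) := by
      rw [hδdef, mul_div_cancel₀ _ (by linarith : (b:ℝ) ≠ 0)]
    have hmem : Set.Ioo x (x + δ) ∈ 𝓝[>] x :=
      Ioo_mem_nhdsGT (by linarith)
    filter_upwards [hmem] with t ht
    obtain ⟨ht1, ht2⟩ := ht
    have hfr : Int.fract ((b:ℝ) * x) = (b:ℝ) * x - ⌊(b:ℝ) * x⌋ := rfl
    have hK : ⌊(b : ℝ) * t⌋ = ⌊(b:ℝ) * x⌋ := by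
      have hup : (b:ℝ) * t < (b:ℝ) * (x + δ) := (mul_lt_mul_iff_right₀ hbR).2 ht2
      have hlo : (b:ℝ) * x < (b:ℝ) * t := (mul_lt_mul_iff_right₀ hbR).2 ht1
      have hfl : (⌊(b:ℝ) * x⌋ : ℝ) ≤ (b:ℝ) * x := Int.floor_le _
      rw [Int.floor_eq_iff]
      constructor
      · linarith
      · push_cast
        nlinarith [hup, hδmul, hfr]
    have hfe : Int.fract ((b:ℝ) * t) = (b:ℝ) * t - ⌊(b:ℝ)*t⌋ := rfl
    rw [hfe, hK, cterm, if_neg (by omega), hfr]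
    ring

lemma tendsto_G_right (a : Fin n → ℤ) (x : ℝ) :
    Tendsto (G a) (𝓝[>] x) (𝓝 (Lp a x)) := by
  have hev : ∀ᶠ t in 𝓝[>] x, G a t = Lp a x + (∑ i, (a i : ℝ)) * (t - x) := by
    have h := eventually_all.2 fun i : Fin n => fract_eventually (a i) x
    filter_upwards [h] with t ht
    unfold G Lp
    rw [Finset.sum_congr rfl fun i _ => ht i, Finset.sum_add_distrib, Finset.sum_mul]
  have hc : Tendsto (fun t : ℝ => Lp a x + (∑ i, (a i : ℝ)) * (t - x)) (𝓝 x)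
      (𝓝 (Lp a x)) := by
    have hcont : Continuous fun t : ℝ => Lp a x + (∑ i, (a i : ℝ)) * (t - x) := by
      continuity
    have := hcont.tendsto x
    simpa using this
  exact Filter.Tendsto.congr' (Filter.EventuallyEq.symm hev)
    (hc.mono_left nhdsWithin_le_nhds)

lemma tendsto_neg_filter (x : ℝ) :
    Tendsto (fun t : ℝ => -t) (𝓝[<] x) (𝓝[>] (-x)) := by
  have h1 : Tendsto (fun t : ℝ => -t) (𝓝 x) (𝓝 (-x)) := continuous_neg.tendsto x
  have h2 : Tendsto (fun t : ℝ => -t) (𝓟 (Set.Iio x)) (𝓟 (Set.Ioi (-x))) :=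
    tendsto_principal_principal.2 fun a (ha : a ∈ Set.Iio x) =>
      Set.mem_Ioi.2 (neg_lt_neg (Set.mem_Iio.1 ha))
  exact h1.inf h2

lemma tendsto_G_left (a : Fin n → ℤ) (x : ℝ) :
    Tendsto (G a) (𝓝[<] x) (𝓝 (Lp (-a) (-x))) := by
  have h := (tendsto_G_right (-a) (-x)).comp (tendsto_neg_filter x)
  exact h.congr fun t => neg_G a t

lemma fx_eq_liminf (a : Fin n → ℤ) (x : ℝ) : fx a x = Filter.liminf (G a) (𝓝[≠] x) := rfl

lemma fx_le_Lp (a : Fin n → ℤ) (x : ℝ) : fx a x ≤ Lp a x := by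
  rw [fx_eq_liminf]
  have hle : 𝓝[>] x ≤ 𝓝[≠] x := nhdsWithin_mono x fun t ht => (Set.mem_Ioi.1 ht).ne'
  have h1 : Filter.liminf (G a) (𝓝[≠] x) ≤ Filter.liminf (G a) (𝓝[>] x) :=
    liminf_le_liminf_of_le hle
      (isBoundedUnder_of ⟨0, fun t => G_nonneg a t⟩)
      ((isBoundedUnder_of ⟨(n : ℝ), fun t => G_le a t⟩).isCoboundedUnder_ge)
  rw [(tendsto_G_right a x).liminf_eq] at h1
  exact h1

lemma zero_le_fx (a : Fin n → ℤ) (x : ℝ) : 0 ≤ fx a x := by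
  rw [fx_eq_liminf]
  exact le_liminf_of_le
    ((isBoundedUnder_of ⟨(n : ℝ), fun t => G_le a t⟩).isCoboundedUnder_ge)
    (Eventually.of_forall fun t => G_nonneg a t)

lemma min_le_fx (a : Fin n → ℤ) (x : ℝ) :
    min (Lp (-a) (-x)) (Lp a x) ≤ fx a x := by
  rw [fx_eq_liminf]
  apply le_of_forall_pos_le_add
  intro ε hε
  have hev : ∀ᶠ t in 𝓝[≠] x, min (Lp (-a) (-x)) (Lp a x) - ε ≤ G a t := by
    rw [← nhdsLT_sup_nhdsGT x, eventually_sup]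
    constructor
    · have h := (tendsto_G_left a x).eventually
        (eventually_ge_nhds (show Lp (-a) (-x) - ε < Lp (-a) (-x) by linarith))
      filter_upwards [h] with t ht
      have := min_le_left (Lp (-a) (-x)) (Lp a x)
      linarith
    · have h := (tendsto_G_right a x).eventually
        (eventually_ge_nhds (show Lp a x - ε < Lp a x by linarith))
      filter_upwards [h] with t ht
      have := min_le_right (Lp (-a) (-x)) (Lp a x)
      linarith
  have h := le_liminf_of_le
    ((isBoundedUnder_of ⟨(n : ℝ), fun t => G_le a t⟩).isCoboundedUnder_ge) hev
  linarith


lemma fract_intCast_div (p : ℕ) [NeZero p] (z : ℤ) :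
    Int.fract ((z : ℝ) / (p : ℝ)) = (((z : ZMod p)).val : ℝ) / p := by
  have hp0 : 0 < p := Nat.pos_of_ne_zero (NeZero.ne p)
  have hpR : (0 : ℝ) < p := by exact_mod_cast hp0
  have hpZ : (0 : ℤ) < p := by exact_mod_cast hp0
  have hmod := Int.mul_ediv_add_emod z (p : ℤ)
  have hcast : (z : ℝ) = (p : ℝ) * ((z / (p:ℤ) : ℤ) : ℝ) + ((z % (p:ℤ) : ℤ) : ℝ) := by
    exact_mod_cast congrArg (Int.cast : ℤ → ℝ) hmod.symm
  have hsplit : (z : ℝ) / (p : ℝ) = ((z / (p:ℤ) : ℤ) : ℝ) + ((z % (p:ℤ) : ℤ) : ℝ) / p := by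
    rw [hcast]; field_simp
  have hr0 : (0:ℤ) ≤ z % (p:ℤ) := Int.emod_nonneg z (by exact_mod_cast hp0.ne')
  have hrp : z % (p:ℤ) < (p:ℤ) := Int.emod_lt_of_pos z hpZ
  have hfr : Int.fract (((z % (p:ℤ) : ℤ) : ℝ) / p) = ((z % (p:ℤ) : ℤ) : ℝ) / p := by
    apply Int.fract_eq_self.2
    constructor
    · apply div_nonneg _ hpR.le; exact_mod_cast hr0
    · rw [div_lt_one hpR]; exact_mod_cast hrp
  rw [hsplit, Int.fract_intCast_add, hfr]
  congr 1
  have hval : (((z : ZMod p)).val : ℤ) = z % (p:ℤ) := ZMod.val_intCast z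
  exact_mod_cast congrArg (Int.cast : ℤ → ℝ) hval.symm

lemma abar_ne_zero {p : ℕ} (hp : p.Prime) (a : Fin n → ℤ) (ha : a ≠ 0)
    (h2 : ∀ i : Fin n, |a i| < (p : ℤ)) :
    (fun i => ((a i : ZMod p))) ≠ (0 : Fin n → ZMod p) := by
  obtain ⟨i, hi⟩ := Function.ne_iff.1 ha
  have hi' : a i ≠ 0 := hi
  intro h
  have hzero : ((a i : ZMod p)) = 0 := congrFun h i
  have hdvd : ((p : ℕ) : ℤ) ∣ a i := (ZMod.intCast_zmod_eq_zero_iff_dvd _ _).1 hzero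
  have := Int.le_of_dvd (abs_pos.2 hi') ((dvd_abs _ _).2 hdvd)
  linarith [h2 i]

lemma sum_val_eq {p : ℕ} [NeZero p] (a : Fin n → ℤ) (m : ℤ) :
    (p : ℝ) * G a ((m : ℝ) / p) = ∑ i, ((((a i * m : ℤ) : ZMod p)).val : ℝ) := by
  have hpR : (0 : ℝ) < p := by
    exact_mod_cast Nat.pos_of_ne_zero (NeZero.ne p)
  unfold G
  rw [Finset.mul_sum]
  refine Finset.sum_congr rfl fun i _ => ?_
  have h1 : (a i : ℝ) * ((m : ℝ) / p) = ((a i * m : ℤ) : ℝ) / p := by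
    push_cast; ring
  rw [h1, fract_intCast_div]
  field_simp

lemma height_le {p : ℕ} (hp : p.Prime) (a : Fin n → ℤ) (ha : a ≠ 0)
    (h2 : ∀ i : Fin n, |a i| < (p : ℤ)) (m : ℤ) (hm : ¬ ((p:ℕ) : ℤ) ∣ m) :
    (nheight (Submodule.span (ZMod p) {fun i => ((a i : ZMod p))}) : ℝ) ≤
      (p : ℝ) * G a ((m : ℝ) / p) := by
  haveI : Fact p.Prime := ⟨hp⟩
  set abar : Fin n → ZMod p := fun i => ((a i : ZMod p)) with habar_def
  set v : Fin n → ZMod p := (m : ZMod p) • abar with hv_def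
  have hv : v ∈ Submodule.span (ZMod p) {abar} :=
    Submodule.smul_mem _ _ (Submodule.subset_span rfl)
  have hm0 : (m : ZMod p) ≠ 0 := by
    rwa [Ne, ZMod.intCast_zmod_eq_zero_iff_dvd]
  have hvne : v ≠ 0 := smul_ne_zero hm0 (abar_ne_zero hp a ha h2)
  have hmem : (∑ i, (v i).val) ∈
      {k : ℕ | ∃ w ∈ Submodule.span (ZMod p) {abar}, w ≠ 0 ∧ k = ∑ i, (w i).val} :=
    ⟨v, hv, hvne, rfl⟩
  have hH : nheight (Submodule.span (ZMod p) {abar}) ≤ ∑ i, (v i).val :=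
    Nat.sInf_le hmem
  have hcast : ((∑ i, (v i).val : ℕ) : ℝ) = ∑ i, ((((a i * m : ℤ) : ZMod p)).val : ℝ) := by
    push_cast
    refine Finset.sum_congr rfl fun i _ => ?_
    congr 2
    rw [hv_def]
    simp only [Pi.smul_apply, smul_eq_mul, habar_def]
    push_cast
    ring
  rw [sum_val_eq, ← hcast]
  exact_mod_cast hH

lemma exists_attain {p : ℕ} (hp : p.Prime) (a : Fin n → ℤ) (ha : a ≠ 0)
    (h2 : ∀ i : Fin n, |a i| < (p : ℤ)) :
    ∃ t₀ : ℕ, 0 < t₀ ∧ t₀ < p ∧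
      (nheight (Submodule.span (ZMod p) {fun i => ((a i : ZMod p))}) : ℝ) =
        (p : ℝ) * G a ((t₀ : ℝ) / p) := by
  haveI : Fact p.Prime := ⟨hp⟩
  set abar : Fin n → ZMod p := fun i => ((a i : ZMod p)) with habar_def
  have habar := abar_ne_zero hp a ha h2
  have hne : {k : ℕ | ∃ w ∈ Submodule.span (ZMod p) {abar}, w ≠ 0 ∧
      k = ∑ i, (w i).val}.Nonempty :=
    ⟨∑ i, (abar i).val, abar, Submodule.subset_span rfl, habar, rfl⟩
  have hmem := Nat.sInf_mem hne
  obtain ⟨v, hv, hvne, hsum⟩ := hmem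
  obtain ⟨c, hc⟩ := Submodule.mem_span_singleton.1 hv
  have hc0 : c ≠ 0 := by
    intro h
    apply hvne
    rw [← hc, h, zero_smul]
  refine ⟨c.val, ZMod.val_pos.2 hc0, ZMod.val_lt c, ?_⟩
  rw [show ((c.val : ℕ) : ℝ) = (((c.val : ℕ) : ℤ) : ℝ) by push_cast; ring]
  have hcv : ((c.val : ℕ) : ZMod p) = c := ZMod.natCast_rightInverse c
  have hvi : ∀ i, v i = (((a i * (c.val : ℤ) : ℤ)) : ZMod p) := by
    intro i
    rw [← hc]
    simp only [Pi.smul_apply, smul_eq_mul, habar_def]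
    push_cast
    rw [hcv]
    ring
  rw [sum_val_eq]
  have hs : (nheight (Submodule.span (ZMod p) {abar}) : ℕ) = ∑ i, (v i).val := hsum
  rw [hs, Nat.cast_sum]
  exact Finset.sum_congr rfl fun i _ => by rw [hvi i]

lemma Lp_eq_G_of (a : Fin n → ℤ) (x : ℝ)
    (h : ∀ i, a i < 0 → Int.fract ((a i : ℝ) * x) ≠ 0) : Lp a x = G a x := by
  unfold Lp G
  refine Finset.sum_congr rfl fun i _ => ?_
  unfold cterm
  by_cases hi : a i < 0
  · rw [if_pos hi]
    have := Int.fract_neg (h i hi)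
    rw [show -(a i : ℝ) * x = -((a i : ℝ) * x) by ring, this]
    ring
  · rw [if_neg hi]


lemma core {p : ℕ} (hp : p.Prime) (a : Fin n → ℤ)
    (h1 : ∀ i j k : Fin n, i ≠ j → |a i * a j| - |a k| < (p : ℤ))
    (h2 : ∀ i : Fin n, |a i| < (p : ℤ)) (x : ℝ) :
    ∃ m : ℤ, ¬ ((p : ℕ) : ℤ) ∣ m ∧
      G a ((m : ℝ) / p) ≤ Lp a x + ((|∑ i, a i| : ℤ) : ℝ) / p := by
  have hp2 : (2 : ℤ) ≤ (p : ℤ) := by exact_mod_cast hp.two_le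
  have hpR : (0 : ℝ) < (p : ℝ) := by exact_mod_cast hp.pos
  set M : ℤ := ⌊(p : ℝ) * x⌋ with hM_def
  have hMle : ((M : ℝ)) ≤ (p : ℝ) * x := Int.floor_le _
  have hMlt : (p : ℝ) * x < (M : ℝ) + 1 := Int.lt_floor_add_one _
  have hxlt : x < ((M : ℝ) + 1) / p := by
    rw [lt_div_iff₀ hpR, mul_comm]; exact hMlt
  have hxge : (M : ℝ) / p ≤ x := by
    rw [div_le_iff₀ hpR, mul_comm]; exact hMle
  -- per-index bounds
  have hposbound : ∀ (b : ℤ) (t : ℝ), 0 ≤ b → (⌊(b : ℝ) * x⌋ ≤ ⌊(b : ℝ) * t⌋) →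
      Int.fract ((b : ℝ) * t) ≤ cterm b x + (b : ℝ) * (t - x) := by
    intro b t hb hfl
    rw [cterm, if_neg (not_lt.2 hb)]
    have h1' : Int.fract ((b : ℝ) * t) = (b : ℝ) * t - ⌊(b : ℝ) * t⌋ := rfl
    have h2' : Int.fract ((b : ℝ) * x) = (b : ℝ) * x - ⌊(b : ℝ) * x⌋ := rfl
    have h3' : ((⌊(b : ℝ) * x⌋ : ℝ)) ≤ ((⌊(b : ℝ) * t⌋ : ℝ)) := by exact_mod_cast hfl
    rw [h1', h2']; linarith
  have hnegbound : ∀ (b : ℤ) (t : ℝ), b < 0 → (⌈-(b : ℝ) * t⌉ ≤ ⌊-(b : ℝ) * x⌋ + 1) →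
      Int.fract ((b : ℝ) * t) ≤ cterm b x + (b : ℝ) * (t - x) := by
    intro b t hb hcl
    rw [cterm, if_pos hb]
    have h1' : Int.fract ((b : ℝ) * t) = (b : ℝ) * t - ⌊(b : ℝ) * t⌋ := rfl
    have h2' : Int.fract (-(b : ℝ) * x) = -(b : ℝ) * x - ⌊-(b : ℝ) * x⌋ := rfl
    have h3' : ⌊(b : ℝ) * t⌋ = -⌈-(b : ℝ) * t⌉ := by
      rw [show (b : ℝ) * t = -(-(b : ℝ) * t) by ring, Int.floor_neg]
    have h4' : ((⌈-(b : ℝ) * t⌉ : ℝ)) ≤ ((⌊-(b : ℝ) * x⌋ : ℝ)) + 1 := by exact_mod_cast hcl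
    rw [h1', h2', h3']
    push_cast
    linarith
  -- step lemma
  have step : ∀ m : ℤ, |(m : ℝ) / p - x| ≤ 1 / p →
      (∀ i, 0 < a i → ⌊(a i : ℝ) * x⌋ ≤ ⌊(a i : ℝ) * ((m : ℝ) / p)⌋) →
      (∀ i, a i < 0 → ⌈-(a i : ℝ) * ((m : ℝ) / p)⌉ ≤ ⌊-(a i : ℝ) * x⌋ + 1) →
      G a ((m : ℝ) / p) ≤ Lp a x + ((|∑ i, a i| : ℤ) : ℝ) / p := by
    intro m hwin hpos hneg
    have hterm : ∀ i : Fin n, Int.fract ((a i : ℝ) * ((m : ℝ) / p)) ≤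
        cterm (a i) x + (a i : ℝ) * ((m : ℝ) / p - x) := by
      intro i
      rcases lt_trichotomy (a i) 0 with hi | hi | hi
      · exact hnegbound (a i) _ hi (hneg i hi)
      · have hz : ((a i : ℝ)) = 0 := by exact_mod_cast hi
        apply hposbound (a i) _ (le_of_eq hi.symm)
        rw [hz]
        norm_num
      · exact hposbound (a i) _ hi.le (hpos i hi)
    have hsum : G a ((m : ℝ) / p) ≤ Lp a x + (∑ i, (a i : ℝ)) * ((m : ℝ) / p - x) := by
      unfold G Lp
      calc ∑ i, Int.fract ((a i : ℝ) * ((m : ℝ) / p))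
          ≤ ∑ i, (cterm (a i) x + (a i : ℝ) * ((m : ℝ) / p - x)) :=
            Finset.sum_le_sum fun i _ => hterm i
        _ = (∑ i, cterm (a i) x) + (∑ i, (a i : ℝ)) * ((m : ℝ) / p - x) := by
            rw [Finset.sum_add_distrib, Finset.sum_mul]
    have hS : (∑ i, (a i : ℝ)) = (((∑ i, a i : ℤ)) : ℝ) := by push_cast; rfl
    have habs : (∑ i, (a i : ℝ)) * ((m : ℝ) / p - x) ≤ ((|∑ i, a i| : ℤ) : ℝ) / p := by
      rw [hS]
      calc (((∑ i, a i : ℤ)) : ℝ) * ((m : ℝ) / p - x)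
          ≤ |(((∑ i, a i : ℤ)) : ℝ) * ((m : ℝ) / p - x)| := le_abs_self _
        _ = |(((∑ i, a i : ℤ)) : ℝ)| * |(m : ℝ) / p - x| := abs_mul _ _
        _ ≤ |(((∑ i, a i : ℤ)) : ℝ)| * (1 / p) := by
            apply mul_le_mul_of_nonneg_left hwin (abs_nonneg _)
        _ = ((|∑ i, a i| : ℤ) : ℝ) / p := by
            rw [← Int.cast_abs]; ring
    linarith
  -- window bounds
  have hdivsplit : ((M : ℝ) + 1) / p = (M : ℝ) / p + 1 / p := by ring
  have hwinR : |((M + 1 : ℤ) : ℝ) / p - x| ≤ 1 / p := by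
    push_cast
    rw [abs_le]
    constructor
    · have : (0 : ℝ) < 1 / p := by positivity
      nlinarith [hxlt]
    · rw [hdivsplit] at *
      linarith [hxge]
  have hwinL : |((M : ℤ) : ℝ) / p - x| ≤ 1 / p := by
    rw [abs_le]
    constructor
    · rw [hdivsplit] at hxlt
      linarith [hxlt]
    · linarith [hxge]
  by_cases hdM1 : ((p : ℕ) : ℤ) ∣ (M + 1)
  · -- use m = M : no positive jump possible
    have hdM : ¬ ((p : ℕ) : ℤ) ∣ M := by
      intro h
      have h1d : ((p : ℕ) : ℤ) ∣ 1 := by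
        have := dvd_sub hdM1 h
        simpa using this
      have := Int.le_of_dvd one_pos h1d
      omega
    refine ⟨M, hdM, step M hwinL ?_ ?_⟩
    · -- positive indices : no jump since p ∣ M+1
      intro i hi
      obtain ⟨c, hc⟩ := hdM1
      have hA : (0 : ℝ) < (a i : ℝ) := by exact_mod_cast hi
      have hAp : (a i : ℝ) < (p : ℝ) := by
        have := h2 i
        rw [abs_lt] at this
        exact_mod_cast this.2
      apply Int.le_floor.2
      -- ⌊a i * x⌋ ≤ a i * (M/p)
      by_contra hcon
      push_neg at hcon
      -- hcon : a i * (M/p) < ⌊a i x⌋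
      have hQle : ((⌊(a i : ℝ) * x⌋ : ℝ)) ≤ (a i : ℝ) * x := Int.floor_le _
      have hxc : (a i : ℝ) * x < (a i : ℝ) * (((M : ℝ) + 1) / p) := by
        apply mul_lt_mul_of_pos_left hxlt hA
      have hMc : ((M : ℝ) + 1) = (p : ℝ) * (c : ℝ) := by
        exact_mod_cast congrArg (Int.cast : ℤ → ℝ) hc
      have hfloorlt : ⌊(a i : ℝ) * x⌋ < a i * c := by
        apply Int.floor_lt.2
        push_cast
        rw [hMc] at hxc
        calc (a i : ℝ) * x < (a i : ℝ) * ((p : ℝ) * c / p) := hxc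
          _ = (a i : ℝ) * c := by field_simp
      have hfloorle : ((⌊(a i : ℝ) * x⌋ : ℝ)) ≤ (a i : ℝ) * (c : ℝ) - 1 := by
        have h' : ((⌊(a i : ℝ) * x⌋ + 1 : ℤ) : ℝ) ≤ ((a i * c : ℤ) : ℝ) := by
          exact_mod_cast hfloorlt
        push_cast at h'
        linarith
      -- a i * (M/p) = a i * c - a i / p ≥ a i * c - 1
      have hMp : (M : ℝ) / p = (c : ℝ) - 1 / p := by
        have : (M : ℝ) = (p : ℝ) * c - 1 := by
          rw [← hMc]; ring
        rw [this]
        field_simp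
      rw [hMp] at hcon
      have : (a i : ℝ) * ((c : ℝ) - 1 / p) = (a i : ℝ) * c - (a i : ℝ) / p := by ring
      rw [this] at hcon
      have hdiv : (a i : ℝ) / p < 1 := by
        rw [div_lt_one hpR]; exact hAp
      have hA0 : (0:ℝ) < (a i : ℝ) / p := by positivity
      linarith
    · -- negative indices at m = M : unconditional
      intro i hi
      have hB : (0 : ℝ) < -(a i : ℝ) := by
        have : (a i : ℝ) < 0 := by exact_mod_cast hi
        linarith
      have hle : -(a i : ℝ) * ((M : ℝ) / p) ≤ -(a i : ℝ) * x :=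
        mul_le_mul_of_nonneg_left hxge hB.le
      calc ⌈-(a i : ℝ) * ((M : ℝ) / p)⌉ ≤ ⌈-(a i : ℝ) * x⌉ := Int.ceil_le_ceil hle
        _ ≤ ⌊-(a i : ℝ) * x⌋ + 1 := Int.ceil_le_floor_add_one _
  · by_cases hJ : ∃ j, a j < 0 ∧ ((⌊-(a j : ℝ) * x⌋ : ℝ) + 1) < -(a j : ℝ) * (((M : ℝ) + 1) / p)
    · -- use m = M ; need p ∤ M and no positive jump
      obtain ⟨j, hj, hjR⟩ := hJ
      have hBj : (0 : ℝ) < -(a j : ℝ) := by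
        have : (a j : ℝ) < 0 := by exact_mod_cast hj
        linarith
      have hdM : ¬ ((p : ℕ) : ℤ) ∣ M := by
        intro h
        obtain ⟨c, hc⟩ := h
        have hMc : (M : ℝ) = (p : ℝ) * (c : ℝ) := by
          exact_mod_cast congrArg (Int.cast : ℤ → ℝ) hc
        -- B*c ≤ ⌊Bx⌋ ; jump gives ⌊Bx⌋+1 < B*c + B/p ⇒ p < B
        have hcx : -(a j : ℝ) * ((c : ℝ)) ≤ -(a j : ℝ) * x := by
          apply mul_le_mul_of_nonneg_left _ hBj.le
          calc (c : ℝ) = (p : ℝ) * c / p := by field_simp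
            _ = (M : ℝ) / p := by rw [hMc]
            _ ≤ x := hxge
        have hfl : (-(a j) * c : ℤ) ≤ ⌊-(a j : ℝ) * x⌋ := by
          apply Int.le_floor.2
          push_cast
          exact hcx
        have hflR : ((-(a j) * c : ℤ) : ℝ) ≤ ((⌊-(a j : ℝ) * x⌋ : ℝ)) := by exact_mod_cast hfl
        have hBp : -(a j : ℝ) < (p : ℝ) := by
          have h' := (abs_lt.1 (h2 j)).1
          have h'' : ((-(p:ℤ) : ℤ) : ℝ) < (a j : ℝ) := by exact_mod_cast h'
          push_cast at h''
          linarith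
        have hexp : -(a j : ℝ) * (((M : ℝ) + 1) / p) = -(a j : ℝ) * c + -(a j : ℝ) / p := by
          rw [hMc]; field_simp; ring
        rw [hexp] at hjR
        push_cast at hflR
        have hgt : 1 < -(a j : ℝ) / p := by linarith
        rw [lt_div_iff₀ hpR, one_mul] at hgt
        linarith
      refine ⟨M, hdM, step M hwinL ?_ ?_⟩
      · -- no positive jump, else contradiction with negative jump j
        intro k hk
        apply Int.le_floor.2
        by_contra hcon
        push_neg at hcon
        -- contradiction (iii)
        have hkj : k ≠ j := by
          intro h; rw [h] at hk; omega
        set A : ℤ := a k with hA_def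
        set B : ℤ := -(a j) with hB_def
        have hA1 : 1 ≤ A := hk
        have hB1 : 1 ≤ B := by omega
        have hAR : (0 : ℝ) < (A : ℝ) := by exact_mod_cast hk
        have hBR : (0 : ℝ) < (B : ℝ) := by exact_mod_cast hB1
        set Q : ℤ := ⌊(A : ℝ) * x⌋ with hQ_def
        set R : ℤ := ⌊(B : ℝ) * x⌋ + 1 with hR_def
        have hBcast : ((B : ℝ)) = -(a j : ℝ) := by
          rw [hB_def]; push_cast; ring
        -- hcon : A * (M/p) < Q
        have hint1 : A * M + 1 ≤ Q * p := by
          have hr : (A : ℝ) * ((M : ℝ) / p) < (Q : ℝ) := hcon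
          have hq : (A : ℝ) * ((M : ℝ) / p) = (A : ℝ) * (M : ℝ) / p := by ring
          rw [hq, div_lt_iff₀ hpR] at hr
          have hr2 : ((A * M : ℤ) : ℝ) < ((Q * p : ℤ) : ℝ) := by push_cast; linarith
          have : A * M < Q * p := by exact_mod_cast hr2
          omega
        have hint2 : R * p + 1 ≤ B * (M + 1) := by
          have hr : (R : ℝ) < (B : ℝ) * (((M : ℝ) + 1) / p) := by
            rw [hR_def, hBcast]
            push_cast
            exact hjR
          have hq : (B : ℝ) * (((M : ℝ) + 1) / p) = (B : ℝ) * ((M : ℝ) + 1) / p := by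
            ring
          rw [hq, lt_div_iff₀ hpR] at hr
          have hr2 : ((R * p : ℤ) : ℝ) < ((B * (M + 1) : ℤ) : ℝ) := by push_cast; linarith
          have : R * p < B * (M + 1) := by exact_mod_cast hr2
          omega
        have hQle : ((Q : ℝ)) ≤ (A : ℝ) * x := Int.floor_le _
        have hRgt : (B : ℝ) * x < (R : ℝ) := by
          rw [hR_def]
          push_cast
          exact Int.lt_floor_add_one _
        have hN : B * Q + 1 ≤ A * R := by
          have : ((B * Q : ℤ) : ℝ) < ((A * R : ℤ) : ℝ) := by
            push_cast
            nlinarith [hQle, hRgt, hAR, hBR]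
          have : B * Q < A * R := by exact_mod_cast this
          omega
        have hH1 : A * B - A < (p : ℤ) := by
          have := h1 k j k hkj
          have habs : |a k * a j| = A * B := by
            rw [hA_def, hB_def, abs_mul, abs_of_pos hk, abs_of_neg hj]
            try ring
          have habs2 : |a k| = A := abs_of_pos hk
          rw [habs, habs2] at this
          omega
        -- combine
        have e1 : B * (A * M + 1) ≤ B * (Q * p) :=
          mul_le_mul_of_nonneg_left hint1 (by omega)
        have e2 : A * (R * p + 1) ≤ A * (B * (M + 1)) :=
          mul_le_mul_of_nonneg_left hint2 (by omega)
        have e4 : (p : ℤ) * 1 ≤ (p : ℤ) * (A * R - B * Q) :=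
          mul_le_mul_of_nonneg_left (by omega) (by omega)
        nlinarith [e1, e2, e4, hH1, hB1]
      · -- negative indices at m = M : unconditional (same as before)
        intro i hi
        have hB : (0 : ℝ) < -(a i : ℝ) := by
          have : (a i : ℝ) < 0 := by exact_mod_cast hi
          linarith
        have hle : -(a i : ℝ) * ((M : ℝ) / p) ≤ -(a i : ℝ) * x :=
          mul_le_mul_of_nonneg_left hxge hB.le
        calc ⌈-(a i : ℝ) * ((M : ℝ) / p)⌉ ≤ ⌈-(a i : ℝ) * x⌉ := Int.ceil_le_ceil hle
          _ ≤ ⌊-(a i : ℝ) * x⌋ + 1 := Int.ceil_le_floor_add_one _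
    · -- use m = M + 1
      push_neg at hJ
      refine ⟨M + 1, hdM1, step (M + 1) hwinR ?_ ?_⟩
      · -- positive indices going right : unconditional
        intro i hi
        apply Int.floor_le_floor
        have hA0 : (0:ℝ) ≤ (a i : ℝ) := by exact_mod_cast hi.le
        apply mul_le_mul_of_nonneg_left _ hA0
        push_cast
        linarith [hxlt]
      · -- negative indices : no jump by hJ
        intro i hi
        have hnj := hJ i hi
        apply Int.ceil_le.2
        push_cast
        push_cast at hnj
        linarith [hnj]

end NathansonAux

theorem hinf_approximates_height (n : ℕ) (hn : 0 < n) (a : Fin n → ℤ) (ha : a ≠ 0)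
    (p : ℕ) (hp : p.Prime)
    (h1 : ∀ i j k : Fin n, i ≠ j → |a i * a j| - |a k| < (p : ℤ))
    (h2 : ∀ i : Fin n, |a i| < (p : ℤ)) :
    0 ≤ (nheight (Submodule.span (ZMod p) {fun i => ((a i : ZMod p))}) : ℝ) / p - hinf a ∧
    (nheight (Submodule.span (ZMod p) {fun i => ((a i : ZMod p))}) : ℝ) / p - hinf a ≤
      (|∑ i, a i| : ℤ) / p := by
  classical
  haveI : Fact p.Prime := ⟨hp⟩
  haveI : NeZero p := ⟨hp.ne_zero⟩
  have hpR : (0 : ℝ) < (p : ℝ) := by exact_mod_cast hp.pos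
  set H : ℝ := (nheight (Submodule.span (ZMod p) {fun i => ((a i : ZMod p))}) : ℝ) with hH_def
  have hbdd : BddBelow (fx a '' Set.Ico (0 : ℝ) 1) := by
    refine ⟨0, ?_⟩
    rintro y ⟨x, _, rfl⟩
    exact NathansonAux.zero_le_fx a x
  have hne : (fx a '' Set.Ico (0 : ℝ) 1).Nonempty :=
    ⟨fx a 0, 0, ⟨le_refl 0, zero_lt_one⟩, rfl⟩
  obtain ⟨t₀, ht0, htp, hHeq⟩ := NathansonAux.exists_attain hp a ha h2
  set x₀ : ℝ := (t₀ : ℝ) / p with hx₀_def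
  have hx₀ : x₀ ∈ Set.Ico (0 : ℝ) 1 := by
    constructor
    · rw [hx₀_def]; positivity
    · rw [hx₀_def, div_lt_one hpR]; exact_mod_cast htp
  have hpZ : Prime ((p : ℕ) : ℤ) := Nat.prime_iff_prime_int.1 hp
  have hfr : ∀ i, a i < 0 → Int.fract ((a i : ℝ) * x₀) ≠ 0 := by
    intro i hi
    have harg : (a i : ℝ) * x₀ = ((a i * (t₀ : ℤ) : ℤ) : ℝ) / p := by
      rw [hx₀_def]; push_cast; ring
    rw [harg, NathansonAux.fract_intCast_div]
    have hnz : ((a i * (t₀ : ℤ) : ℤ) : ZMod p) ≠ 0 := by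
      rw [Ne, ZMod.intCast_zmod_eq_zero_iff_dvd]
      intro hdvd
      rcases hpZ.dvd_mul.1 hdvd with hda | hdt
      · have hne0 : a i ≠ 0 := by omega
        have := Int.le_of_dvd (abs_pos.2 hne0) ((dvd_abs _ _).2 hda)
        linarith [h2 i]
      · have : ((p : ℕ) : ℤ) ∣ ((t₀ : ℕ) : ℤ) := hdt
        have hd : p ∣ t₀ := by exact_mod_cast this
        have := Nat.le_of_dvd ht0 hd
        omega
    intro h0
    apply hnz
    have hv0 : (((a i * (t₀ : ℤ) : ℤ) : ZMod p).val : ℝ) = 0 := by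
      rcases div_eq_zero_iff.1 h0 with h | h
      · exact h
      · exact absurd h hpR.ne'
    have hvn : ((a i * (t₀ : ℤ) : ℤ) : ZMod p).val = 0 := by exact_mod_cast hv0
    exact (ZMod.val_eq_zero _).1 hvn
  have hLpx₀ : NathansonAux.Lp a x₀ = H / p := by
    rw [NathansonAux.Lp_eq_G_of a x₀ hfr, hH_def, hHeq, hx₀_def]
    field_simp
  constructor
  · have hmem : fx a x₀ ∈ fx a '' Set.Ico (0 : ℝ) 1 := ⟨x₀, hx₀, rfl⟩
    have hinf_le : hinf a ≤ fx a x₀ := csInf_le hbdd hmem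
    have hfxle : fx a x₀ ≤ NathansonAux.Lp a x₀ := NathansonAux.fx_le_Lp a x₀
    rw [hLpx₀] at hfxle
    linarith
  · have key : ∀ x : ℝ, H / p ≤ fx a x + ((|∑ i, a i| : ℤ) : ℝ) / p := by
      intro x
      have hminle := NathansonAux.min_le_fx a x
      obtain ⟨m, hm, hGm⟩ := NathansonAux.core hp a h1 h2 x
      have hR : H ≤ (p : ℝ) * NathansonAux.G a ((m : ℝ) / p) :=
        NathansonAux.height_le hp a ha h2 m hm
      have hRight : H / p ≤ NathansonAux.Lp a x + ((|∑ i, a i| : ℤ) : ℝ) / p := by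
        rw [div_le_iff₀ hpR]
        nlinarith [hR, hGm, hpR]
      have h1' : ∀ i j k : Fin n, i ≠ j → |(-a) i * (-a) j| - |(-a) k| < (p : ℤ) := by
        intro i j k hij
        simpa using h1 i j k hij
      have h2' : ∀ i : Fin n, |(-a) i| < (p : ℤ) := by
        intro i; simpa using h2 i
      obtain ⟨m', hm', hGm'⟩ := NathansonAux.core hp (-a) h1' h2' (-x)
      have hGneg : NathansonAux.G (-a) ((m' : ℝ) / p) =
          NathansonAux.G a (((-m' : ℤ) : ℝ) / p) := by
        rw [← NathansonAux.neg_G a (((-m' : ℤ) : ℝ) / p)]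
        congr 1
        push_cast
        ring
      have hm'' : ¬ ((p : ℕ) : ℤ) ∣ (-m') := by
        rw [dvd_neg]; exact hm'
      have hRm : H ≤ (p : ℝ) * NathansonAux.G a (((-m' : ℤ) : ℝ) / p) :=
        NathansonAux.height_le hp a ha h2 (-m') hm''
      have hSneg : ((|∑ i, (-a) i| : ℤ) : ℝ) = ((|∑ i, a i| : ℤ) : ℝ) := by
        have hs : (∑ i, (-a) i) = -(∑ i, a i) := by simp
        rw [hs, abs_neg]
      rw [hSneg] at hGm'
      have hLeft : H / p ≤ NathansonAux.Lp (-a) (-x) + ((|∑ i, a i| : ℤ) : ℝ) / p := by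
        rw [div_le_iff₀ hpR]
        nlinarith [hRm, hGm', hGneg, hpR]
      have hminbd : H / p - ((|∑ i, a i| : ℤ) : ℝ) / p ≤
          min (NathansonAux.Lp (-a) (-x)) (NathansonAux.Lp a x) :=
        le_min (by linarith) (by linarith)
      linarith
    have hfinal : H / p - ((|∑ i, a i| : ℤ) : ℝ) / p ≤ hinf a := by
      apply le_csInf hne
      rintro y ⟨x, _, rfl⟩
      linarith [key x]
    linarith
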